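/- Let n and r be integers with 2 < r < n. An invertible linear map g ∈ GL_n(ℂ) satisfies e_r(g·x) = e_r(x) for all x ∈ ℂⁿ if and only if there exist a permutation σ of {1,…,n} and a complex number ω with ω^r = 1 such that g equals ω times the permutation matrix of σ. In particular, the stabilizer of e_r in GL_n(ℂ) is isomorphic to the semidirect product of the symmetric group S_n with the group of r-th roots of unity. -/

import Mathlib

open Matrix

/-- The `r`-th elementary symmetric polynomial in `n` variables, evaluated at `x : Fin n → ℂ`. -/
noncomputable def esymm (n r : ℕ) (x : Fin n → ℂ) : ℂ :=
  ∑ I ∈ Finset.powersetCard r Finset.univ, ∏ i ∈ I, x i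

/-- The stabilizer of the `r`-th elementary symmetric polynomial inside `GLₙ(ℂ)`. -/
def esymmStabilizer (n r : ℕ) : Subgroup (GL (Fin n) ℂ) where
  carrier := {g | ∀ x : Fin n → ℂ,
    esymm n r ((g : Matrix (Fin n) (Fin n) ℂ).mulVec x) = esymm n r x}
  one_mem' := by
    intro x
    simp [Units.val_one, Matrix.one_mulVec]
  mul_mem' := by
    intro a b ha hb x
    rw [Units.val_mul, ← Matrix.mulVec_mulVec, ha, hb]
  inv_mem' := by
    intro a ha x
    have h := ha ((↑a⁻¹ : Matrix (Fin n) (Fin n) ℂ).mulVec x)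
    rw [Matrix.mulVec_mulVec, ← Units.val_mul, mul_inv_cancel, Units.val_one,
      Matrix.one_mulVec] at h
    exact h.symm


open Finset Polynomial

namespace ESym
variable {n r : ℕ}

lemma esymm_smul (c : ℂ) (x : Fin n → ℂ) : esymm n r (c • x) = c ^ r * esymm n r x := by
  unfold esymm
  rw [Finset.mul_sum]
  refine Finset.sum_congr rfl fun I hI => ?_
  rw [Finset.mem_powersetCard] at hI
  rw [← hI.2]
  simp [Finset.prod_mul_distrib]

lemma esymm_perm (σ : Equiv.Perm (Fin n)) (x : Fin n → ℂ) :
    esymm n r (x ∘ σ) = esymm n r x := by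
  unfold esymm
  refine Finset.sum_bij' (fun I _ => I.image σ) (fun I _ => I.image σ.symm) ?_ ?_ ?_ ?_ ?_
  · intro I hI
    rw [Finset.mem_powersetCard] at hI ⊢
    exact ⟨Finset.subset_univ _, by rw [Finset.card_image_of_injective _ σ.injective, hI.2]⟩
  · intro I hI
    rw [Finset.mem_powersetCard] at hI ⊢
    exact ⟨Finset.subset_univ _, by rw [Finset.card_image_of_injective _ σ.symm.injective, hI.2]⟩
  · intro I _
    simp [Finset.image_image, Function.comp_def]
  · intro I _
    simp [Finset.image_image, Function.comp_def]
  · intro I _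
    exact (Finset.prod_image fun a _ b _ h => σ.injective h).symm

lemma permMatrix_mulVec (σ : Equiv.Perm (Fin n)) (x : Fin n → ℂ) :
    (σ.permMatrix ℂ).mulVec x = x ∘ σ := by
  funext i
  simp only [Matrix.mulVec, dotProduct]
  rw [Finset.sum_eq_single (σ i)]
  · rw [Equiv.Perm.permMatrix, PEquiv.toMatrix_toPEquiv_eq, Matrix.submatrix_apply, id_eq, Matrix.one_apply, if_pos rfl,
      one_mul, Function.comp_apply]
  · intro b _ hb
    rw [Equiv.Perm.permMatrix, PEquiv.toMatrix_toPEquiv_eq, Matrix.submatrix_apply, id_eq, Matrix.one_apply,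
      if_neg (Ne.symm hb), zero_mul]
  · simp


lemma smul_perm_invariance {ω : ℂ} (hω : ω ^ r = 1) (σ : Equiv.Perm (Fin n)) (x : Fin n → ℂ) :
    esymm n r ((ω • σ.permMatrix ℂ).mulVec x) = esymm n r x := by
  rw [Matrix.smul_mulVec, permMatrix_mulVec, esymm_smul, hω, one_mul, esymm_perm]

/-- The univariate polynomial `t ↦ e_r(y + t v)`. -/
noncomputable def Q (r : ℕ) (y v : Fin n → ℂ) : Polynomial ℂ :=
  ∑ I ∈ Finset.powersetCard r Finset.univ, ∏ i ∈ I, (C (v i) * X + C (y i))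

lemma eval_Q (y v : Fin n → ℂ) (t : ℂ) :
    (Q r y v).eval t = esymm n r (fun i => y i + t * v i) := by
  unfold Q esymm
  rw [Polynomial.eval_finset_sum]
  refine Finset.sum_congr rfl fun I _ => ?_
  rw [Polynomial.eval_prod]
  refine Finset.prod_congr rfl fun i _ => ?_
  rw [Polynomial.eval_add, Polynomial.eval_mul, Polynomial.eval_C, Polynomial.eval_X,
    Polynomial.eval_C]
  ring

lemma coeff_two_Q (y v : Fin n → ℂ) :
    (Q r y v).coeff 2 = ∑ I ∈ Finset.powersetCard r Finset.univ,
      ∑ J ∈ Finset.powersetCard 2 I, (∏ i ∈ J, v i) * ∏ i ∈ I \ J, y i := by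
  unfold Q
  rw [Polynomial.finset_sum_coeff]
  refine Finset.sum_congr rfl fun I _ => ?_
  rw [Finset.prod_add]
  rw [Polynomial.finset_sum_coeff]
  rw [Finset.powersetCard_eq_filter, Finset.sum_filter]
  refine Finset.sum_congr rfl fun J _ => ?_
  have : (∏ i ∈ J, (C (v i) * X)) * ∏ i ∈ I \ J, C (y i)
      = C ((∏ i ∈ J, v i) * ∏ i ∈ I \ J, y i) * X ^ J.card := by
    have h1 : (∏ x ∈ J, C (v x)) = C (∏ x ∈ J, v x) :=
      (map_prod (Polynomial.C : ℂ →+* Polynomial ℂ) v J).symm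
    have h2 : (∏ i ∈ I \ J, C (y i)) = C (∏ i ∈ I \ J, y i) :=
      (map_prod (Polynomial.C : ℂ →+* Polynomial ℂ) y (I \ J)).symm
    rw [Finset.prod_mul_distrib, Finset.prod_const, h1, h2, Polynomial.C_mul]
    ring
  rw [this, Polynomial.coeff_C_mul, Polynomial.coeff_X_pow]
  by_cases h : J.card = 2
  · rw [if_pos h, if_pos h.symm, mul_one]
  · rw [if_neg h, if_neg (fun hh => h hh.symm), mul_zero]


/-- `v` is an "affine direction" for `e_r`. -/
def Aff (n r : ℕ) (v : Fin n → ℂ) : Prop := ∀ y : Fin n → ℂ, (Q r y v).coeff 2 = 0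

lemma aff_single (j : Fin n) (c : ℂ) : Aff n r (Pi.single j c) := by
  intro y
  have hdeg : (Q r y (Pi.single j c)).natDegree ≤ 1 := by
    refine Polynomial.natDegree_sum_le_of_forall_le _ _ fun I _ => ?_
    refine (Polynomial.natDegree_prod_le _ _).trans ?_
    have h1 : ∀ i ∈ I, (C ((Pi.single j c : Fin n → ℂ) i) * X + C (y i)).natDegree
        ≤ if i = j then 1 else 0 := by
      intro i _
      by_cases hij : i = j
      · rw [if_pos hij]
        refine (Polynomial.natDegree_add_le _ _).trans ?_
        simp [Polynomial.natDegree_C]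
        exact (Polynomial.natDegree_mul_le).trans (by simp)
      · rw [if_neg hij, Pi.single_eq_of_ne hij]
        simp
    refine (Finset.sum_le_sum h1).trans ?_
    rw [Finset.sum_ite_eq' I j (fun _ => 1)]
    split <;> omega
  exact Polynomial.coeff_eq_zero_of_natDegree_lt (lt_of_le_of_lt hdeg (by norm_num))

lemma aff_transfer (g : GL (Fin n) ℂ)
    (hg : ∀ x, esymm n r ((g : Matrix (Fin n) (Fin n) ℂ).mulVec x) = esymm n r x)
    {v : Fin n → ℂ} (hv : Aff n r v) :
    Aff n r ((g : Matrix (Fin n) (Fin n) ℂ).mulVec v) := by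
  intro y
  set M : Matrix (Fin n) (Fin n) ℂ := (g : Matrix (Fin n) (Fin n) ℂ) with hM
  set y₀ := ((g⁻¹ : GL (Fin n) ℂ) : Matrix (Fin n) (Fin n) ℂ).mulVec y with hy₀
  have hy : M.mulVec y₀ = y := by
    rw [hy₀, Matrix.mulVec_mulVec, hM, ← Units.val_mul, mul_inv_cancel, Units.val_one,
      Matrix.one_mulVec]
  have hQ : Q r y (M.mulVec v) = Q r y₀ v := by
    apply Polynomial.funext
    intro t
    rw [eval_Q, eval_Q]
    have key : (fun i => y i + t * (M.mulVec v) i) = M.mulVec (fun i => y₀ i + t * v i) := by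
      have h2 : (fun i => y₀ i + t * v i) = y₀ + t • v := rfl
      rw [h2, Matrix.mulVec_add, Matrix.mulVec_smul, hy]
      rfl
    rw [key, hg]
  rw [hQ]
  exact hv y₀

lemma pc_filter {k : ℕ} {U s : Finset (Fin n)} (hUs : U ⊆ s) :
    Finset.powersetCard k U = (Finset.powersetCard k s).filter (· ⊆ U) := by
  ext J
  simp only [Finset.mem_powersetCard, Finset.mem_filter]
  exact ⟨fun h => ⟨⟨h.1.trans hUs, h.2⟩, h.1⟩, fun h => ⟨h.2, h.1.2⟩⟩


lemma coeff_two_indicator (hr2 : 2 ≤ r) {v : Fin n → ℂ} (T : Finset (Fin n))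
    (hT : T.card = r - 2)
    (h : (Q r (fun i => if i ∈ T then 1 else 0) v).coeff 2 = 0) :
    ∑ J ∈ Finset.powersetCard 2 Tᶜ, ∏ i ∈ J, v i = 0 := by
  rw [coeff_two_Q] at h
  have step1 : ∀ I ∈ Finset.powersetCard r (Finset.univ : Finset (Fin n)),
      (∑ J ∈ Finset.powersetCard 2 I, (∏ i ∈ J, v i) *
        ∏ i ∈ I \ J, (if i ∈ T then (1:ℂ) else 0))
      = ∑ J ∈ Finset.powersetCard 2 (Finset.univ : Finset (Fin n)),
          (if J ⊆ I then (∏ i ∈ J, v i) * (if I \ J ⊆ T then (1:ℂ) else 0) else 0) := by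
    intro I _
    rw [pc_filter (Finset.subset_univ I), Finset.sum_filter]
    refine Finset.sum_congr rfl fun J _ => ?_
    congr 1
    rw [Finset.prod_boole]
    simp only [← Finset.subset_iff]
  rw [Finset.sum_congr rfl step1, Finset.sum_comm] at h
  have step2 : ∀ J ∈ Finset.powersetCard 2 (Finset.univ : Finset (Fin n)),
      (∑ I ∈ Finset.powersetCard r (Finset.univ : Finset (Fin n)),
        (if J ⊆ I then (∏ i ∈ J, v i) * (if I \ J ⊆ T then (1:ℂ) else 0) else 0))
      = if J ⊆ Tᶜ then ∏ i ∈ J, v i else 0 := by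
    intro J hJ
    rw [Finset.mem_powersetCard] at hJ
    have hJ2 : J.card = 2 := hJ.2
    by_cases hdisj : Disjoint J T
    · have hsc : J ⊆ Tᶜ := fun a ha => Finset.mem_compl.mpr (Finset.disjoint_left.mp hdisj ha)
      rw [if_pos hsc]
      have hmem : J ∪ T ∈ Finset.powersetCard r (Finset.univ : Finset (Fin n)) := by
        rw [Finset.mem_powersetCard]
        refine ⟨Finset.subset_univ _, ?_⟩
        rw [Finset.card_union_of_disjoint hdisj, hJ2, hT]
        omega
      refine (Finset.sum_eq_single_of_mem _ hmem ?_).trans ?_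
      · intro I hI hne
        rw [Finset.mem_powersetCard] at hI
        split_ifs with h1 h2
        · exfalso
          apply hne
          have hc : (I \ J).card = T.card := by
            rw [Finset.card_sdiff_of_subset h1, hI.2, hJ2, hT]
          have : I \ J = T := Finset.eq_of_subset_of_card_le h2 (le_of_eq hc.symm)
          rw [← this, Finset.union_comm, Finset.sdiff_union_of_subset h1]
        · exact mul_zero _
        · rfl
      · rw [if_pos Finset.subset_union_left,
          Finset.union_sdiff_cancel_left hdisj, if_pos (Finset.Subset.refl T), mul_one]
    · rw [if_neg (fun hc => hdisj (Finset.disjoint_left.mpr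
        (fun a ha haT => Finset.mem_compl.mp (hc ha) haT)))]
      refine Finset.sum_eq_zero fun I hI => ?_
      rw [Finset.mem_powersetCard] at hI
      split_ifs with h1 h2
      · exfalso
        apply hdisj
        have hc : (I \ J).card = T.card := by
          rw [Finset.card_sdiff_of_subset h1, hI.2, hJ2, hT]
        have hTe : I \ J = T := Finset.eq_of_subset_of_card_le h2 (le_of_eq hc.symm)
        rw [← hTe]
        exact (Finset.sdiff_disjoint).symm
      · exact mul_zero _
      · rfl
  rw [Finset.sum_congr rfl step2, ← Finset.sum_filter, ← pc_filter (Finset.subset_univ Tᶜ)] at h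
  exact h


/-- Sum of products over all 2-element subsets of `U`. -/
noncomputable def e2 (v : Fin n → ℂ) (U : Finset (Fin n)) : ℂ :=
  ∑ J ∈ Finset.powersetCard 2 U, ∏ i ∈ J, v i

lemma e2_up {v : Fin n → ℂ} {m : ℕ} (hm : 2 ≤ m)
    (h : ∀ U : Finset (Fin n), U.card = m → e2 v U = 0)
    (V : Finset (Fin n)) (hV : m ≤ V.card) : e2 v V = 0 := by
  have count : ∀ J ∈ Finset.powersetCard 2 V,
      ((Finset.powersetCard m V).filter (J ⊆ ·)).card = (V.card - 2).choose (m - 2) := by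
    intro J hJ
    rw [Finset.mem_powersetCard] at hJ
    have hbij : ((Finset.powersetCard m V).filter (J ⊆ ·)).card
        = (Finset.powersetCard (m - 2) (V \ J)).card := by
      refine Finset.card_bij' (fun U _ => U \ J) (fun W _ => W ∪ J) ?_ ?_ ?_ ?_
      · intro U hU
        rw [Finset.mem_filter, Finset.mem_powersetCard] at hU
        rw [Finset.mem_powersetCard]
        exact ⟨Finset.sdiff_subset_sdiff hU.1.1 (Finset.Subset.refl J),
          by rw [Finset.card_sdiff_of_subset hU.2, hU.1.2, hJ.2]⟩
      · intro W hW
        rw [Finset.mem_powersetCard] at hW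
        have hdisj : Disjoint W J := Finset.disjoint_left.mpr
          (fun a ha => (Finset.mem_sdiff.mp (hW.1 ha)).2)
        rw [Finset.mem_filter, Finset.mem_powersetCard]
        refine ⟨⟨Finset.union_subset (hW.1.trans Finset.sdiff_subset) hJ.1, ?_⟩,
          Finset.subset_union_right⟩
        rw [Finset.card_union_of_disjoint hdisj, hW.2, hJ.2]
        omega
      · intro U hU
        rw [Finset.mem_filter] at hU
        exact Finset.sdiff_union_of_subset hU.2
      · intro W hW
        rw [Finset.mem_powersetCard] at hW
        exact Finset.union_sdiff_cancel_right (Finset.disjoint_left.mpr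
          (fun a ha => (Finset.mem_sdiff.mp (hW.1 ha)).2))
    rw [hbij, Finset.card_powersetCard, Finset.card_sdiff_of_subset hJ.1, hJ.2]
  have key : ∑ U ∈ Finset.powersetCard m V, e2 v U
      = ((V.card - 2).choose (m - 2) : ℂ) * e2 v V := by
    unfold e2
    calc ∑ U ∈ Finset.powersetCard m V, ∑ J ∈ Finset.powersetCard 2 U, ∏ i ∈ J, v i
        = ∑ U ∈ Finset.powersetCard m V, ∑ J ∈ Finset.powersetCard 2 V,
            (if J ⊆ U then ∏ i ∈ J, v i else 0) := by
          refine Finset.sum_congr rfl fun U hU => ?_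
          rw [Finset.mem_powersetCard] at hU
          rw [pc_filter hU.1, Finset.sum_filter]
      _ = ∑ J ∈ Finset.powersetCard 2 V, ∑ U ∈ Finset.powersetCard m V,
            (if J ⊆ U then ∏ i ∈ J, v i else 0) := Finset.sum_comm
      _ = ∑ J ∈ Finset.powersetCard 2 V,
            (((Finset.powersetCard m V).filter (J ⊆ ·)).card : ℂ) * ∏ i ∈ J, v i := by
          refine Finset.sum_congr rfl fun J _ => ?_
          rw [← Finset.sum_filter, Finset.sum_const, nsmul_eq_mul]
      _ = ((V.card - 2).choose (m - 2) : ℂ) * ∑ J ∈ Finset.powersetCard 2 V, ∏ i ∈ J, v i := by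
          rw [Finset.mul_sum]
          exact Finset.sum_congr rfl fun J hJ => by rw [count J hJ]
  have hz : ∑ U ∈ Finset.powersetCard m V, e2 v U = 0 := by
    refine Finset.sum_eq_zero fun U hU => ?_
    rw [Finset.mem_powersetCard] at hU
    exact h U hU.2
  rw [hz] at key
  have hpos : 0 < (V.card - 2).choose (m - 2) := Nat.choose_pos (by omega)
  have := key.symm
  rcases mul_eq_zero.mp this with hc | he
  · exact absurd hc (Nat.cast_ne_zero.mpr hpos.ne')
  · exact he


lemma e2_insert (v : Fin n → ℂ) (u : Fin n) (s : Finset (Fin n)) (hu : u ∉ s) :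
    e2 v (insert u s) = e2 v s + v u * ∑ i ∈ s, v i := by
  unfold e2
  rw [Finset.powersetCard_succ_insert hu]
  rw [Finset.sum_union]
  · congr 1
    rw [Finset.sum_image ?hinj]
    case hinj =>
      intro K hK K' hK' hKK
      rw [Finset.mem_coe, Finset.mem_powersetCard] at hK hK'
      have h1 : u ∉ K := fun hu' => hu (hK.1 hu')
      have h2 : u ∉ K' := fun hu' => hu (hK'.1 hu')
      rw [← Finset.erase_insert h1, hKK, Finset.erase_insert h2]
    rw [Finset.powersetCard_one, Finset.sum_map, Finset.mul_sum]
    refine Finset.sum_congr rfl fun i hi => ?_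
    have hui : u ∉ ({i} : Finset (Fin n)) := by
      rw [Finset.mem_singleton]
      intro hmem
      exact hu (hmem ▸ hi)
    simp only [Function.Embedding.coeFn_mk]
    rw [Finset.prod_insert hui, Finset.prod_singleton]
  · rw [Finset.disjoint_right]
    intro J hJim hJ2
    rw [Finset.mem_image] at hJim
    obtain ⟨K, _, hK⟩ := hJim
    rw [Finset.mem_powersetCard] at hJ2
    exact hu (hJ2.1 (hK ▸ Finset.mem_insert_self u K))

lemma e2_split (v : Fin n → ℂ) (u : Fin n) :
    e2 v Finset.univ = e2 v (Finset.univ.erase u)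
      + v u * ∑ i ∈ Finset.univ.erase u, v i := by
  have := e2_insert v u (Finset.univ.erase u) (Finset.notMem_erase u _)
  rwa [Finset.insert_erase (Finset.mem_univ u)] at this

lemma axis_of_e2 (hr2 : 2 < r) (hrn : r < n) {v : Fin n → ℂ}
    (h : ∀ U : Finset (Fin n), U.card = n - r + 2 → e2 v U = 0) :
    ∃ k, ∀ i, i ≠ k → v i = 0 := by
  have hup := e2_up (m := n - r + 2) (by omega) h
  have hcardu : (Finset.univ : Finset (Fin n)).card = n := by
    rw [Finset.card_univ, Fintype.card_fin]
  have huniv : e2 v Finset.univ = 0 := hup _ (by omega)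
  have herase : ∀ u : Fin n, e2 v (Finset.univ.erase u) = 0 := by
    intro u
    refine hup _ ?_
    rw [Finset.card_erase_of_mem (Finset.mem_univ u), hcardu]
    omega
  set S := ∑ i, v i with hSdef
  have hkey : ∀ u, v u * (S - v u) = 0 := by
    intro u
    have hsplit := e2_split v u
    rw [huniv, herase u, zero_add] at hsplit
    have hsum : ∑ i ∈ Finset.univ.erase u, v i = S - v u := by
      have := Finset.sum_erase_add Finset.univ v (Finset.mem_univ u)
      rw [hSdef]
      linear_combination this
    rw [hsum] at hsplit
    exact hsplit.symm
  by_cases hS : S = 0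
  · refine ⟨⟨0, by omega⟩, fun i _ => ?_⟩
    have := hkey i
    rw [hS, zero_sub, mul_neg, neg_eq_zero, mul_self_eq_zero] at this
    exact this
  · set A := Finset.univ.filter (fun u => v u ≠ 0) with hA
    have hSA : S = ∑ u ∈ A, v u := (Finset.sum_filter_ne_zero Finset.univ).symm
    have hvA : ∀ u ∈ A, v u = S := by
      intro u hu
      rw [hA, Finset.mem_filter] at hu
      rcases mul_eq_zero.mp (hkey u) with h0 | hd
      · exact absurd h0 hu.2
      · exact (sub_eq_zero.mp hd).symm
    have hSS : S = (A.card : ℂ) * S := by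
      conv_lhs => rw [hSA, Finset.sum_congr rfl hvA]
      rw [Finset.sum_const, nsmul_eq_mul]
    have hcard1 : A.card = 1 := by
      have h2 : ((A.card : ℂ) - 1) * S = 0 := by linear_combination (-1 : ℂ) * hSS
      rcases mul_eq_zero.mp h2 with hc | hc
      · have : (A.card : ℂ) = ((1 : ℕ) : ℂ) := by push_cast; linear_combination hc
        exact Nat.cast_inj.mp this
      · exact absurd hc hS
    obtain ⟨k, hk⟩ := Finset.card_eq_one.mp hcard1
    refine ⟨k, fun i hik => ?_⟩
    by_contra hvi
    have : i ∈ A := by rw [hA, Finset.mem_filter]; exact ⟨Finset.mem_univ i, hvi⟩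
    rw [hk, Finset.mem_singleton] at this
    exact hik this


lemma glMulVec_injective (g : GL (Fin n) ℂ) :
    Function.Injective ((g : Matrix (Fin n) (Fin n) ℂ).mulVec) := by
  intro x y hxy
  have h := congrArg (((g⁻¹ : GL (Fin n) ℂ) : Matrix (Fin n) (Fin n) ℂ).mulVec) hxy
  rwa [Matrix.mulVec_mulVec, Matrix.mulVec_mulVec, ← Units.val_mul, inv_mul_cancel,
    Units.val_one, Matrix.one_mulVec, Matrix.one_mulVec] at h

lemma forward (hr2 : 2 < r) (hrn : r < n) (g : GL (Fin n) ℂ)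
    (hg : ∀ x, esymm n r ((g : Matrix (Fin n) (Fin n) ℂ).mulVec x) = esymm n r x) :
    ∃ (σ : Equiv.Perm (Fin n)) (ω : ℂ), ω ^ r = 1 ∧
      (g : Matrix (Fin n) (Fin n) ℂ) = ω • σ.permMatrix ℂ := by
  set M : Matrix (Fin n) (Fin n) ℂ := (g : Matrix (Fin n) (Fin n) ℂ) with hMdef
  have hcardu : (Finset.univ : Finset (Fin n)).card = n := by
    rw [Finset.card_univ, Fintype.card_fin]
  -- columns of `M` are supported on a single coordinate
  have hax : ∀ j : Fin n, ∃ k, ∀ i, i ≠ k → M i j = 0 := by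
    intro j
    have haff : Aff n r (M.mulVec (Pi.single j 1)) := aff_transfer g hg (aff_single j 1)
    have he2 : ∀ U : Finset (Fin n), U.card = n - r + 2 →
        e2 (M.mulVec (Pi.single j 1)) U = 0 := by
      intro U hU
      have hT : Uᶜ.card = r - 2 := by
        rw [Finset.card_compl, hU, Fintype.card_fin]
        omega
      have hco := coeff_two_indicator (by omega) Uᶜ hT (haff _)
      rw [compl_compl] at hco
      exact hco
    obtain ⟨k, hk⟩ := axis_of_e2 hr2 hrn he2
    refine ⟨k, fun i hik => ?_⟩
    have h0 := hk i hik
    simpa [Matrix.mulVec_single] using h0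
  choose τ hτ using hax
  set c : Fin n → ℂ := fun j => M (τ j) j with hcdef
  have hMij : ∀ i j, M i j = if i = τ j then c j else 0 := by
    intro i j
    by_cases hij : i = τ j
    · rw [if_pos hij, hij]
    · rw [if_neg hij]
      exact hτ j i hij
  have hc0 : ∀ j, c j ≠ 0 := by
    intro j hc
    have hcol : M.mulVec (Pi.single j 1) = M.mulVec 0 := by
      rw [Matrix.mulVec_zero]
      funext i
      simp only [Matrix.mulVec_single_one, Matrix.col_apply, Pi.zero_apply]
      by_cases hij : i = τ j
      · rw [hij]; exact hc
      · exact hτ j i hij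
    have := glMulVec_injective g hcol
    have h1 := congrFun this j
    rw [Pi.single_eq_same, Pi.zero_apply] at h1
    exact one_ne_zero h1
  have hτinj : Function.Injective τ := by
    intro a b hab
    by_contra hne
    have hx0 : M.mulVec (c b • (Pi.single a 1 : Fin n → ℂ) - c a • (Pi.single b 1 : Fin n → ℂ)) = M.mulVec 0 := by
      rw [Matrix.mulVec_zero, Matrix.mulVec_sub, Matrix.mulVec_smul, Matrix.mulVec_smul]
      funext i
      simp only [Pi.sub_apply, Pi.smul_apply, Matrix.mulVec_single_one, Matrix.col_apply, smul_eq_mul,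
        Pi.zero_apply]
      rw [hMij i a, hMij i b, ← hab]
      by_cases hia : i = τ a
      · rw [if_pos hia, if_pos hia]; ring
      · rw [if_neg hia, if_neg hia]; ring
    have hinj := glMulVec_injective g hx0
    have h1 := congrFun hinj a
    simp only [Pi.sub_apply, Pi.smul_apply, Pi.single_eq_same, smul_eq_mul, mul_one,
      Pi.zero_apply] at h1
    rw [Pi.single_eq_of_ne hne] at h1
    simp only [mul_zero, sub_zero] at h1
    exact hc0 b h1
  have he : ∃ e : Equiv.Perm (Fin n), ∀ j, e j = τ j :=
    ⟨Equiv.ofBijective τ (Finite.injective_iff_bijective.mp hτinj), fun _ => rfl⟩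
  obtain ⟨e, hee⟩ := he
  have hMij' : ∀ i j, M i j = if i = e j then c j else 0 := by
    intro i j; rw [hMij, hee]
  -- products of `c` over `r`-sets are 1
  have hprod : ∀ J : Finset (Fin n), J.card = r → ∏ j ∈ J, c j = 1 := by
    intro J hJ
    set x : Fin n → ℂ := fun i => if i ∈ J then 1 else 0 with hxdef
    have hJmem : J ∈ Finset.powersetCard r (Finset.univ : Finset (Fin n)) := by
      rw [Finset.mem_powersetCard]; exact ⟨Finset.subset_univ _, hJ⟩
    have hx : esymm n r x = 1 := by
      unfold esymm
      have h1 : ∀ I ∈ Finset.powersetCard r (Finset.univ : Finset (Fin n)),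
          ∏ i ∈ I, x i = if I ⊆ J then (1:ℂ) else 0 := by
        intro I _
        rw [hxdef]
        rw [Finset.prod_boole]
        simp only [← Finset.subset_iff]
      rw [Finset.sum_congr rfl h1]
      rw [Finset.sum_eq_single_of_mem J hJmem]
      · rw [if_pos (Finset.Subset.refl J)]
      · intro I hI hne
        rw [Finset.mem_powersetCard] at hI
        rw [if_neg]
        intro hsub
        exact hne (Finset.eq_of_subset_of_card_le hsub (by rw [hI.2, hJ]))
    have hu : M.mulVec x = fun i => if e.symm i ∈ J then c (e.symm i) else 0 := by
      funext i
      show ∑ j, M i j * x j = _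
      have h2 : ∀ j, M i j * x j = if j ∈ J then M i j else 0 := by
        intro j
        rw [hxdef]
        simp only [mul_ite, mul_one, mul_zero]
      rw [Finset.sum_congr rfl (fun j _ => h2 j), Finset.sum_ite_mem,
        Finset.univ_inter]
      have h3 : ∀ j ∈ J, M i j = if j = e.symm i then c j else 0 := by
        intro j _
        rw [hMij' i j]
        refine if_congr ?_ rfl rfl
        exact ⟨fun hh => by rw [hh, Equiv.symm_apply_apply], fun hh => by
          rw [hh, Equiv.apply_symm_apply]⟩
      rw [Finset.sum_congr rfl h3, Finset.sum_ite_eq' J (e.symm i) c]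
    have hval : esymm n r (M.mulVec x) = ∏ j ∈ J, c j := by
      rw [hu]
      unfold esymm
      have hI0mem : J.image e ∈ Finset.powersetCard r (Finset.univ : Finset (Fin n)) := by
        rw [Finset.mem_powersetCard]
        exact ⟨Finset.subset_univ _, by rw [Finset.card_image_of_injective _ e.injective, hJ]⟩
      rw [Finset.sum_eq_single_of_mem (J.image e) hI0mem]
      · rw [Finset.prod_image (fun a _ b _ h => e.injective h)]
        refine Finset.prod_congr rfl fun j hj => ?_
        rw [Equiv.symm_apply_apply, if_pos hj]
      · intro I hI hne
        rw [Finset.mem_powersetCard] at hI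
        obtain ⟨i, hiI, hiJ⟩ := Finset.not_subset.mp (fun hsub => hne
          (Finset.eq_of_subset_of_card_le hsub
            (by rw [hI.2, Finset.card_image_of_injective _ e.injective, hJ])))
        refine Finset.prod_eq_zero hiI ?_
        rw [if_neg]
        intro hmem
        exact hiJ (by
          have : i = e (e.symm i) := (Equiv.apply_symm_apply e i).symm
          rw [this]
          exact Finset.mem_image_of_mem e hmem)
    have hfin := hg x
    rw [hval, hx] at hfin
    exact hfin
  -- all `c j` are equal
  have hceq : ∀ j j' : Fin n, c j = c j' := by
    intro j j'
    by_cases hjj : j = j'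
    · rw [hjj]
    · have hcard2 : ({j, j'} : Finset (Fin n)).card = 2 := by
        rw [Finset.card_insert_of_notMem (by simp [hjj]), Finset.card_singleton]
      have hcardc : ((Finset.univ : Finset (Fin n)) \ {j, j'}).card = n - 2 := by
        rw [Finset.card_sdiff_of_subset (Finset.subset_univ _), hcard2, hcardu]
      obtain ⟨K, hK1, hK2⟩ := Finset.exists_subset_card_eq
        (show r - 1 ≤ ((Finset.univ : Finset (Fin n)) \ {j, j'}).card by omega)
      have hjK : j ∉ K := fun hm => by
        have := hK1 hm
        rw [Finset.mem_sdiff] at this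
        exact this.2 (Finset.mem_insert_self j _)
      have hj'K : j' ∉ K := fun hm => by
        have := hK1 hm
        rw [Finset.mem_sdiff] at this
        exact this.2 (Finset.mem_insert_of_mem (Finset.mem_singleton_self j'))
      have h1 := hprod (insert j K) (by rw [Finset.card_insert_of_notMem hjK, hK2]; omega)
      have h2 := hprod (insert j' K) (by rw [Finset.card_insert_of_notMem hj'K, hK2]; omega)
      rw [Finset.prod_insert hjK] at h1
      rw [Finset.prod_insert hj'K] at h2
      calc c j = c j * (c j' * ∏ k ∈ K, c k) := by rw [h2, mul_one]
        _ = c j' * (c j * ∏ k ∈ K, c k) := by ring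
        _ = c j' := by rw [h1, mul_one]
  have hn0 : 0 < n := by omega
  set j0 : Fin n := ⟨0, hn0⟩ with hj0
  set ω : ℂ := c j0 with hω
  have hωr : ω ^ r = 1 := by
    obtain ⟨J, _, hJcard⟩ := Finset.exists_subset_card_eq
      (show r ≤ (Finset.univ : Finset (Fin n)).card by omega)
    have hp := hprod J hJcard
    rw [Finset.prod_congr rfl (fun j _ => hceq j j0)] at hp
    rw [Finset.prod_const, hJcard] at hp
    exact hp
  refine ⟨e.symm, ω, hωr, ?_⟩
  ext i j
  rw [Matrix.smul_apply, Equiv.Perm.permMatrix, PEquiv.toMatrix_toPEquiv_eq, Matrix.submatrix_apply, id_eq,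
    Matrix.one_apply, hMij' i j]
  have hiff : i = e j ↔ e.symm i = j := by
    constructor
    · intro hh; rw [hh, Equiv.symm_apply_apply]
    · intro hh; rw [← hh, Equiv.apply_symm_apply]
  by_cases hij : i = e j
  · rw [if_pos hij, if_pos (hiff.mp hij), smul_eq_mul, mul_one, hceq j j0]
  · rw [if_neg hij, if_neg (fun hh => hij (hiff.mpr hh)), smul_eq_mul, mul_zero]


lemma permMatrix_mul (σ τ : Equiv.Perm (Fin n)) :
    (σ.permMatrix ℂ) * (τ.permMatrix ℂ) = ((τ * σ).permMatrix ℂ) := by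
  show σ.toPEquiv.toMatrix * τ.toPEquiv.toMatrix = (τ * σ).toPEquiv.toMatrix
  rw [← PEquiv.toMatrix_trans, ← Equiv.toPEquiv_trans]
  rfl

lemma permMatrix_one : ((1 : Equiv.Perm (Fin n)).permMatrix ℂ) = 1 := by
  show (Equiv.refl (Fin n)).toPEquiv.toMatrix = 1
  rw [Equiv.toPEquiv_refl, PEquiv.toMatrix_refl]

/-- The permutation `σ` as an element of `GL(n, ℂ)`, given by the matrix of `σ⁻¹`
(so that the assignment is a group homomorphism). -/
def permGL (n : ℕ) : Equiv.Perm (Fin n) →* GL (Fin n) ℂ :=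
  MonoidHom.mk' (fun σ => ⟨(σ⁻¹).permMatrix ℂ, σ.permMatrix ℂ,
      by rw [permMatrix_mul, mul_inv_cancel, permMatrix_one],
      by rw [permMatrix_mul, inv_mul_cancel, permMatrix_one]⟩)
    (fun σ τ => Units.ext (by
      show ((σ * τ)⁻¹).permMatrix ℂ = (σ⁻¹).permMatrix ℂ * (τ⁻¹).permMatrix ℂ
      rw [permMatrix_mul, _root_.mul_inv_rev]))

/-- Scalars as elements of `GL(n, ℂ)`. -/
def scalarGL (n : ℕ) : ℂˣ →* GL (Fin n) ℂ :=
  Units.map (algebraMap ℂ (Matrix (Fin n) (Fin n) ℂ)).toMonoidHom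

lemma scalarGL_val (z : ℂˣ) : ((scalarGL n z : GL (Fin n) ℂ) : Matrix (Fin n) (Fin n) ℂ)
    = (z : ℂ) • (1 : Matrix (Fin n) (Fin n) ℂ) := by
  show algebraMap ℂ (Matrix (Fin n) (Fin n) ℂ) (z : ℂ) = _
  rw [Algebra.algebraMap_eq_smul_one]

lemma permGL_val (σ : Equiv.Perm (Fin n)) :
    ((permGL n σ : GL (Fin n) ℂ) : Matrix (Fin n) (Fin n) ℂ) = (σ⁻¹).permMatrix ℂ := rfl

lemma permGL_inv_val (σ : Equiv.Perm (Fin n)) :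
    (((permGL n σ)⁻¹ : GL (Fin n) ℂ) : Matrix (Fin n) (Fin n) ℂ) = σ.permMatrix ℂ := rfl

noncomputable def f₁ (n r : ℕ) : rootsOfUnity r ℂ →* esymmStabilizer n r :=
  ((scalarGL n).comp (rootsOfUnity r ℂ).subtype).codRestrict _ (fun z => by
    show ∀ x, esymm n r (((scalarGL n (z : ℂˣ) : GL (Fin n) ℂ) :
      Matrix (Fin n) (Fin n) ℂ).mulVec x) = esymm n r x
    intro x
    rw [scalarGL_val, Matrix.smul_mulVec, Matrix.one_mulVec, esymm_smul,
      (mem_rootsOfUnity' r (z : ℂˣ)).mp z.2, one_mul])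

noncomputable def f₂ (n r : ℕ) : Equiv.Perm (Fin n) →* esymmStabilizer n r :=
  (permGL n).codRestrict _ (fun σ => by
    show ∀ x, esymm n r (((permGL n σ : GL (Fin n) ℂ) :
      Matrix (Fin n) (Fin n) ℂ).mulVec x) = esymm n r x
    intro x
    rw [permGL_val, permMatrix_mulVec, esymm_perm])

noncomputable def Φ (n r : ℕ) :
    SemidirectProduct (rootsOfUnity r ℂ) (Equiv.Perm (Fin n)) 1 →* esymmStabilizer n r :=
  SemidirectProduct.lift (f₁ n r) (f₂ n r) (fun σ => MonoidHom.ext fun z => by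
    show f₁ n r z = (f₂ n r σ) * (f₁ n r z) * (f₂ n r σ)⁻¹
    rw [eq_mul_inv_iff_mul_eq]
    refine Subtype.ext (Units.ext ?_)
    show ((scalarGL n (z : ℂˣ) : GL (Fin n) ℂ) : Matrix (Fin n) (Fin n) ℂ)
        * ((permGL n σ : GL (Fin n) ℂ) : Matrix (Fin n) (Fin n) ℂ)
      = ((permGL n σ : GL (Fin n) ℂ) : Matrix (Fin n) (Fin n) ℂ)
        * ((scalarGL n (z : ℂˣ) : GL (Fin n) ℂ) : Matrix (Fin n) (Fin n) ℂ)
    rw [scalarGL_val, permGL_val, smul_mul_assoc, mul_smul_comm, one_mul, mul_one])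


end ESym

/-- Let `2 < r < n`. A `g ∈ GLₙ(ℂ)` satisfies `e_r(g·x) = e_r(x)` for all
`x ∈ ℂⁿ` if and only if `g = ω • P_σ` for a permutation `σ` of `{1,…,n}` and an `r`-th root
of unity `ω`. In particular the stabilizer of `e_r` in `GLₙ(ℂ)` is isomorphic to the
semidirect product of the symmetric group `Sₙ` with the group `ℤ_r` of `r`-th roots of
unity (the action being trivial). -/
theorem esymm_stabilizer_eq (n r : ℕ) (hr : 2 < r) (hrn : r < n) :
    (∀ g : GL (Fin n) ℂ,
      (∀ x : Fin n → ℂ,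
          esymm n r ((g : Matrix (Fin n) (Fin n) ℂ).mulVec x) = esymm n r x) ↔
        ∃ (σ : Equiv.Perm (Fin n)) (ω : ℂ), ω ^ r = 1 ∧
          (g : Matrix (Fin n) (Fin n) ℂ) = ω • σ.permMatrix ℂ) ∧
    Nonempty (esymmStabilizer n r ≃* SemidirectProduct (rootsOfUnity r ℂ) (Equiv.Perm (Fin n)) 1) := by
  have hn0 : 0 < n := by omega
  constructor
  · intro g
    constructor
    · exact ESym.forward hr hrn g
    · rintro ⟨σ, ω, hω, hmat⟩ x
      rw [hmat]
      exact ESym.smul_perm_invariance hω σ x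
  · have hinj : Function.Injective (ESym.Φ n r) := by
      rw [injective_iff_map_eq_one]
      intro a ha
      have h2 : (((ESym.Φ n r a : esymmStabilizer n r) : GL (Fin n) ℂ) :
          Matrix (Fin n) (Fin n) ℂ) = 1 := by
        rw [ha]
        rfl
      have h3 : ((a.left : ℂˣ) : ℂ) • ((a.right⁻¹).permMatrix ℂ)
          = (1 : Matrix (Fin n) (Fin n) ℂ) := by
        rw [← h2]
        show _ = ((ESym.scalarGL n (a.left : ℂˣ) : GL (Fin n) ℂ) : Matrix (Fin n) (Fin n) ℂ)
          * ((ESym.permGL n a.right : GL (Fin n) ℂ) : Matrix (Fin n) (Fin n) ℂ)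
        rw [ESym.scalarGL_val, ESym.permGL_val, smul_mul_assoc, one_mul]
      have hσ : a.right = 1 := by
        have hpt : ∀ i : Fin n, a.right⁻¹ i = i := by
          intro i
          by_contra hne
          have h4 : (((a.left : ℂˣ) : ℂ) • ((a.right⁻¹).permMatrix ℂ)) i i
              = (1 : Matrix (Fin n) (Fin n) ℂ) i i := by rw [h3]
          rw [Matrix.smul_apply, Equiv.Perm.permMatrix, PEquiv.toMatrix_toPEquiv_eq, Matrix.submatrix_apply, id_eq,
            Matrix.one_apply, if_neg hne, smul_eq_mul, mul_zero, Matrix.one_apply_eq] at h4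
          exact zero_ne_one h4
        have h5 : a.right⁻¹ = 1 := Equiv.Perm.ext fun i => (hpt i)
        exact inv_eq_one.mp h5
      have hz : ((a.left : ℂˣ) : ℂ) = 1 := by
        rw [hσ, inv_one, ESym.permMatrix_one] at h3
        have h4 : ∀ i j, (((a.left : ℂˣ) : ℂ) • (1 : Matrix (Fin n) (Fin n) ℂ)) i j
            = (1 : Matrix (Fin n) (Fin n) ℂ) i j := fun i j => by rw [h3]
        have h5 := h4 ⟨0, hn0⟩ ⟨0, hn0⟩
        rw [Matrix.smul_apply, Matrix.one_apply_eq, smul_eq_mul, mul_one] at h5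
        exact h5
      have hleft : a.left = 1 := Subtype.ext (Units.ext hz)
      ext
      · rw [hleft]; rfl
      · rw [hσ]; rfl
    have hsurj : Function.Surjective (ESym.Φ n r) := by
      rintro ⟨g, hgmem⟩
      have hg : ∀ x, esymm n r ((g : Matrix (Fin n) (Fin n) ℂ).mulVec x) = esymm n r x := hgmem
      obtain ⟨σ, ω, hω, hmat⟩ := ESym.forward hr hrn g hg
      have hω0 : ω ≠ 0 := fun h0 => by
        rw [h0, zero_pow (by omega : r ≠ 0)] at hω
        exact zero_ne_one hω
      refine ⟨⟨⟨Units.mk0 ω hω0, (mem_rootsOfUnity' r _).mpr (by simpa using hω)⟩, σ⁻¹⟩, ?_⟩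
      refine Subtype.ext (Units.ext ?_)
      show ((ESym.scalarGL n (Units.mk0 ω hω0) : GL (Fin n) ℂ) : Matrix (Fin n) (Fin n) ℂ)
          * ((ESym.permGL n σ⁻¹ : GL (Fin n) ℂ) : Matrix (Fin n) (Fin n) ℂ)
        = (g : Matrix (Fin n) (Fin n) ℂ)
      rw [ESym.scalarGL_val, ESym.permGL_val, inv_inv, smul_mul_assoc, one_mul, hmat]
      rfl
    exact ⟨(MulEquiv.ofBijective (ESym.Φ n r) ⟨hinj, hsurj⟩).symm⟩
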